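/- Every even binary word is a cyclic shuffle square: if W is a binary word in which each of the two letters occurs an even number of times, then W can be split into two disjoint subwords A and B of equal length such that A is a cyclic shift of B. -/

import Mathlib

inductive Interleave {α : Type*} : List α → List α → List α → Prop
  | nil : Interleave [] [] []
  | left {a : α} {l₁ l₂ l : List α} : Interleave l₁ l₂ l → Interleave (a :: l₁) l₂ (a :: l)
  | right {a : α} {l₁ l₂ l : List α} : Interleave l₁ l₂ l → Interleave l₁ (a :: l₂) (a :: l)

def IsShuffleSquare {α : Type*} (W : List α) : Prop := ∃ U, Interleave U U W

/-- Interleaving a list into its `p`-filtered and `!p`-filtered parts. -/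
lemma interleave_filter (p : Bool → Bool) (l : List Bool) :
    Interleave (l.filter p) (l.filter fun x => !(p x)) l := by
  induction l with
  | nil => exact .nil
  | cons a l ih =>
    cases hp : p a
    · simpa [List.filter_cons, hp] using Interleave.right ih
    · simpa [List.filter_cons, hp] using Interleave.left ih

lemma interleave_append {A₁ B₁ L₁ A₂ B₂ L₂ : List Bool}
    (h₁ : Interleave A₁ B₁ L₁) (h₂ : Interleave A₂ B₂ L₂) :
    Interleave (A₁ ++ A₂) (B₁ ++ B₂) (L₁ ++ L₂) := by
  induction h₁ with
  | nil => simpa using h₂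
  | left _ ih => exact .left ih
  | right _ ih => exact .right ih

/-- count true + count false = length for Bool lists -/
lemma count_true_add_count_false (l : List Bool) :
    l.count true + l.count false = l.length := by
  induction l with
  | nil => simp
  | cons a l ih => cases a <;> simp [List.count_cons] <;> omega

/-- Discrete intermediate value theorem, upward version. -/
lemma ivt_up (f : ℕ → ℕ) (n t : ℕ) (h : ∀ i, i < n → f (i + 1) ≤ f i + 1)
    (h0 : f 0 ≤ t) (hn : t ≤ f n) : ∃ i, i ≤ n ∧ f i = t := by
  induction n with
  | zero => exact ⟨0, le_refl _, le_antisymm h0 hn⟩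
  | succ n ih =>
    rcases le_or_gt t (f n) with h' | h'
    · obtain ⟨i, hi, hfi⟩ := ih (fun i hi => h i (hi.trans (Nat.lt_succ_self n))) h'
      exact ⟨i, hi.trans (Nat.le_succ n), hfi⟩
    · have hb := h n (Nat.lt_succ_self n)
      exact ⟨n + 1, le_refl _, by omega⟩

/-- Discrete intermediate value theorem, both directions. -/
lemma ivt (f : ℕ → ℕ) (n t : ℕ)
    (hup : ∀ i, i < n → f (i + 1) ≤ f i + 1)
    (hdn : ∀ i, i < n → f i ≤ f (i + 1) + 1)
    (hsum : f 0 + f n = t + t) : ∃ i, i ≤ n ∧ f i = t := by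
  rcases le_total (f 0) t with h0 | h0
  · exact ivt_up f n t hup h0 (by omega)
  · -- reverse direction: use g i = f (n - i)
    obtain ⟨i, hi, hfi⟩ := ivt_up (fun i => f (n - i)) n t
      (by
        intro i hi
        show f (n - (i + 1)) ≤ f (n - i) + 1
        have h1 : n - i = (n - (i + 1)) + 1 := by omega
        rw [h1]
        exact hdn _ (by omega))
      (by simpa using (by omega : f n ≤ t)) (by simpa using h0)
    exact ⟨n - i, by omega, hfi⟩

theorem even_binary_is_cyclic_shuffle_square (W : List Bool)
    (h : ∀ b : Bool, Even (W.count b)) :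
    ∃ A B : List Bool, Interleave A B W ∧ A.length = B.length ∧
      ∃ X Y : List Bool, B = X ++ Y ∧ A = Y ++ X := by
  obtain ⟨o, ho⟩ := h true
  obtain ⟨z, hz⟩ := h false
  set n := z + o with hn
  have hlen : W.length = n + n := by
    have := count_true_add_count_false W
    omega
  -- the sliding window count function
  set f : ℕ → ℕ := fun i => ((W.drop i).take n).count true with hf
  -- window shift bounds
  have hshift : ∀ i, i < n → ∃ u v : ℕ, u ≤ 1 ∧ v ≤ 1 ∧
      f i = u + (((W.drop (i+1)).take (n-1)).count true) ∧
      f (i+1) = (((W.drop (i+1)).take (n-1)).count true) + v := by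
    intro i hi
    have hiW : i < W.length := by omega
    have hinW : i + n < W.length := by omega
    have hd : W.drop i = W[i] :: W.drop (i + 1) := List.drop_eq_getElem_cons hiW
    have hn1 : n = (n - 1) + 1 := by omega
    refine ⟨if W[i] = true then 1 else 0, if W[i + n] = true then 1 else 0,
      by split <;> omega, by split <;> omega, ?_, ?_⟩
    · rw [hf]
      simp only
      rw [hd, hn1, List.take_succ_cons, List.count_cons]
      cases hW : W[i] <;> simp [hW] <;> omega
    · rw [hf]
      simp only
      conv_lhs => rw [hn1, List.take_succ]
      have : (W.drop (i + 1))[n - 1]? = some W[i + n] := by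
        rw [List.getElem?_drop]
        have : i + 1 + (n - 1) = i + n := by omega
        rw [this, List.getElem?_eq_getElem hinW]
      rw [this, List.count_append]
      cases hW : W[i + n] <;> simp [hW, List.count_cons] <;> omega
  have hsum : f 0 + f n = o + o := by
    have hfn : f n = (W.drop n).count true := by
      rw [hf]
      simp only
      rw [List.take_of_length_le (by rw [List.length_drop]; omega)]
    have : (W.take n).count true + (W.drop n).count true = W.count true := by
      rw [← List.count_append, List.take_append_drop]
    rw [hf]
    simp only [List.drop_zero]
    have e : List.take n (List.drop n W) = List.drop n W :=
      List.take_of_length_le (by rw [List.length_drop]; omega)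
    rw [e]
    omega
  obtain ⟨i₀, hi₀, hfi₀⟩ := ivt f n o
    (by intro i hi; obtain ⟨u, v, hu, hv, e1, e2⟩ := hshift i hi; omega)
    (by intro i hi; obtain ⟨u, v, hu, hv, e1, e2⟩ := hshift i hi; omega)
    hsum
  -- decompose W = P ++ M ++ S
  set P := W.take i₀ with hP
  set M := (W.drop i₀).take n with hM
  set S := (W.drop i₀).drop n with hS
  have hW : W = P ++ (M ++ S) := by
    rw [hP, hM, hS, List.take_append_drop, List.take_append_drop]
  have hMlen : M.length = n := by
    rw [hM, List.length_take, List.length_drop]; omega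
  have hMt : M.count true = o := hfi₀
  have hMf : M.count false = z := by
    have := count_true_add_count_false M
    omega
  -- counts in P and S
  have hcf : P.count false + (M.count false + S.count false) = z + z := by
    rw [← List.count_append, ← List.count_append, ← hW]; exact hz
  have hct : P.count true + (M.count true + S.count true) = o + o := by
    rw [← List.count_append, ← List.count_append, ← hW]; exact ho
  have hac : P.count false + S.count false = z := by omega
  have hpq : P.count true + S.count true = o := by omega
  -- the two subwords
  refine ⟨P.filter (· == false) ++ (M.filter (· == true) ++ S.filter (· == false)),
          P.filter (· == true) ++ (M.filter (· == false) ++ S.filter (· == true)),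
          ?_, ?_, ?_⟩
  · rw [hW]
    refine interleave_append ?_ (interleave_append ?_ ?_)
    · have := interleave_filter (· == false) P
      have hcong : (P.filter fun x => !(x == false)) = P.filter (· == true) := by
        apply List.filter_congr
        intro x _; cases x <;> simp
      rwa [hcong] at this
    · have := interleave_filter (· == true) M
      have hcong : (M.filter fun x => !(x == true)) = M.filter (· == false) := by
        apply List.filter_congr
        intro x _; cases x <;> simp
      rwa [hcong] at this
    · have := interleave_filter (· == false) S
      have hcong : (S.filter fun x => !(x == false)) = S.filter (· == true) := by
        apply List.filter_congr
        intro x _; cases x <;> simp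
      rwa [hcong] at this
  · simp only [List.length_append, ← List.countP_eq_length_filter]
    have e1 : List.countP (fun x => x == false) P = P.count false := rfl
    have e2 : List.countP (fun x => x == true) M = M.count true := rfl
    have e3 : List.countP (fun x => x == false) S = S.count false := rfl
    have e4 : List.countP (fun x => x == true) P = P.count true := rfl
    have e5 : List.countP (fun x => x == false) M = M.count false := rfl
    have e6 : List.countP (fun x => x == true) S = S.count true := rfl
    rw [e1, e2, e3, e4, e5, e6]
    omega
  · refine ⟨List.replicate (P.count true) true ++ List.replicate (S.count false) false,
            List.replicate (P.count false) false ++ List.replicate (S.count true) true, ?_, ?_⟩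
    · have hz' : z = S.count false + P.count false := by omega
      have hsplit : List.replicate (S.count false + P.count false) (false : Bool) =
          List.replicate (S.count false) false ++ List.replicate (P.count false) false :=
        List.replicate_add _ _ _
      rw [List.filter_beq, List.filter_beq, List.filter_beq, hMf, hz', hsplit]
      simp only [List.append_assoc]
    · have ho' : M.count true = S.count true + P.count true := by omega
      have hsplit : List.replicate (S.count true + P.count true) (true : Bool) =
          List.replicate (S.count true) true ++ List.replicate (P.count true) true :=
        List.replicate_add _ _ _
      rw [List.filter_beq, List.filter_beq, List.filter_beq, ho', hsplit]
      simp only [List.append_assoc]
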